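/- arXiv:1304.4773 — 8 statements merged into one kernel-verified Lean document; each statement's English description precedes it below -/
import Mathlib

section
/- Let ρ: ℝ → ℝ be a convex and symmetric loss function with ρ(0) = 0 and ρ(x) > 0 for x ≠ 0. Fix a penalty parameter λ > 0 and a subset size h with 1 ≤ h ≤ n. Consider the regression estimator β̂(Z) defined for a sample Z = (X, y) with X ∈ ℝ^{n×p}, y ∈ ℝ^n, as a minimizer over β ∈ ℝ^p of Q_Z(β) = Σ_{i=1}^{h} (ρ(y − Xβ))_{i:n} + h λ Σ_{j=1}^{p} |β_j|, where (ρ(y − Xβ))_{1:n} ≤ ⋯ ≤ (ρ(y − Xβ))_{n:n} denote the order statistics of the losses ρ(y_i − x_i'β). Then for every sample Z, the replacement finite-sample breakdown point of β̂ equals (n − h + 1)/n. -/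
open Finset

/-- The `i`-th order statistic of the vector `r`, i.e. the `i`-th entry after sorting
the entries of `r` in nondecreasing order. -/
noncomputable def orderStat {n : ℕ} (r : Fin n → ℝ) (i : Fin n) : ℝ :=
  r (Tuple.sort r i)

/-- The sum of the `h` smallest entries (order statistics) of the vector `r`. -/
noncomputable def trimmedSum {n : ℕ} (h : ℕ) (r : Fin n → ℝ) : ℝ :=
  ∑ i ∈ Finset.univ.filter (fun i : Fin n => (i : ℕ) < h), orderStat r i

/-- The L¹ norm of a coefficient vector `β ∈ ℝ^p`. -/
noncomputable def l1norm {p : ℕ} (β : Fin p → ℝ) : ℝ := ∑ j, |β j|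

/-- The Euclidean (L²) norm of a coefficient vector `β ∈ ℝ^p`. -/
noncomputable def euclNorm {p : ℕ} (β : Fin p → ℝ) : ℝ := Real.sqrt (∑ j, β j ^ 2)

/-- `Corrupt m X X' y y'` : the sample `(X', y')` is obtained from the sample `(X, y)` by
replacing (at most) `m` of the `n` observations `(xᵢ', yᵢ)` by arbitrary values. -/
def Corrupt {n p : ℕ} (m : ℕ) (X X' : Fin n → Fin p → ℝ) (y y' : Fin n → ℝ) : Prop :=
  ∃ s : Finset (Fin n), s.card ≤ m ∧ ∀ i ∉ s, (∀ j, X' i j = X i j) ∧ y' i = y i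

/-- The trimmed penalized objective function
`Q_Z(β) = Σ_{i=1}^{h} (ρ(y − Xβ))_{i:n} + h λ Σ_j |β_j|` with loss `ρ`. -/
noncomputable def QGen {n p : ℕ} (ρ : ℝ → ℝ) (lam : ℝ) (h : ℕ)
    (X : Fin n → Fin p → ℝ) (y : Fin n → ℝ) (β : Fin p → ℝ) : ℝ :=
  trimmedSum h (fun i => ρ (y i - ∑ j, X i j * β j)) + (h : ℝ) * lam * l1norm β

/-- `BreaksDown est X y m` : the supremum of `‖est(Z̃)‖₂` over all samples `Z̃` obtained
from `Z = (X, y)` by replacing `m` observations by arbitrary values is infinite. -/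
def BreaksDown {n p : ℕ} (est : (Fin n → Fin p → ℝ) → (Fin n → ℝ) → Fin p → ℝ)
    (X : Fin n → Fin p → ℝ) (y : Fin n → ℝ) (m : ℕ) : Prop :=
  ∀ M : ℝ, ∃ X' y', Corrupt m X X' y y' ∧ M < euclNorm (est X' y')

/-- The replacement finite-sample breakdown point
`ε*(est; Z) = min{ m/n : sup_{Z̃} ‖est(Z̃)‖₂ = ∞ }`. -/
noncomputable def breakdownPoint {n p : ℕ}
    (est : (Fin n → Fin p → ℝ) → (Fin n → ℝ) → Fin p → ℝ)
    (X : Fin n → Fin p → ℝ) (y : Fin n → ℝ) : ℝ :=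
  ((sInf {m : ℕ | BreaksDown est X y m} : ℕ) : ℝ) / n

lemma card_filter_lt {n k : ℕ} (hk : k ≤ n) :
    (Finset.univ.filter (fun i : Fin n => (i:ℕ) < k)).card = k := by
  have : Finset.univ.filter (fun i : Fin n => (i:ℕ) < k)
      = Finset.map (Fin.castLEEmb hk) Finset.univ := by
    ext i
    simp only [Finset.mem_filter, Finset.mem_map, Finset.mem_univ, true_and,
      Fin.castLEEmb_apply]
    constructor
    · intro hi; exact ⟨⟨i, hi⟩, by ext; rfl⟩
    · rintro ⟨j, rfl⟩; exact j.2
  rw [this, Finset.card_map, Finset.card_univ, Fintype.card_fin]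

lemma trimmedSum_nonneg {n h : ℕ} {r : Fin n → ℝ} (hr : ∀ i, 0 ≤ r i) :
    0 ≤ trimmedSum h r :=
  Finset.sum_nonneg fun i _ => hr _

lemma trimmedSum_le_sum {n h : ℕ} (hh1 : 1 ≤ h) (hhn : h ≤ n) (r : Fin n → ℝ)
    (B : Finset (Fin n)) (hB : B.card = h) : trimmedSum h r ≤ ∑ i ∈ B, r i := by
  set σ := Tuple.sort r with hσ
  set F : Finset (Fin n) := Finset.univ.filter (fun i : Fin n => (i:ℕ) < h) with hF
  set A : Finset (Fin n) := F.image σ with hA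
  have hcardF : F.card = h := card_filter_lt hhn
  have hcardA : A.card = h := by
    rw [hA, Finset.card_image_of_injective _ σ.injective, hcardF]
  have hk : h - 1 < n := by omega
  set v : ℝ := r (σ ⟨h - 1, hk⟩) with hv
  have hmono := Tuple.monotone_sort r
  have hAle : ∀ a ∈ A, r a ≤ v := by
    intro a ha
    rw [hA, Finset.mem_image] at ha
    obtain ⟨i, hi, rfl⟩ := ha
    rw [hF, Finset.mem_filter] at hi
    exact hmono (Fin.le_def.mpr (show (i : ℕ) ≤ h - 1 by omega))
  have hAge : ∀ b, b ∉ A → v ≤ r b := by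
    intro b hb
    have hjb : σ (σ.symm b) = b := σ.apply_symm_apply b
    have hge : h ≤ (σ.symm b : ℕ) := by
      by_contra hlt
      push_neg at hlt
      exact hb (Finset.mem_image.mpr ⟨σ.symm b,
        Finset.mem_filter.mpr ⟨Finset.mem_univ _, hlt⟩, hjb⟩)
    have hle : (⟨h - 1, hk⟩ : Fin n) ≤ σ.symm b :=
      Fin.le_def.mpr (show h - 1 ≤ (σ.symm b : ℕ) by omega)
    have h' : r (σ ⟨h - 1, hk⟩) ≤ r (σ (σ.symm b)) := hmono hle
    rw [hjb] at h'
    exact h'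
  have hsum : trimmedSum h r = ∑ a ∈ A, r a := by
    rw [hA, Finset.sum_image (fun a _ b _ hab => σ.injective hab)]
    rfl
  have hdiffcard : (A \ B).card = (B \ A).card :=
    Finset.card_sdiff_comm (by rw [hcardA, hB])
  have h1 : ∑ a ∈ A \ B, r a ≤ (A \ B).card • v :=
    Finset.sum_le_card_nsmul _ _ v (fun a ha => hAle a (Finset.mem_sdiff.mp ha).1)
  have h2 : (B \ A).card • v ≤ ∑ b ∈ B \ A, r b :=
    Finset.card_nsmul_le_sum _ _ v (fun b hb => hAge b (Finset.mem_sdiff.mp hb).2)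
  have key : ∑ a ∈ A \ B, r a ≤ ∑ b ∈ B \ A, r b := by
    calc ∑ a ∈ A \ B, r a ≤ (A \ B).card • v := h1
      _ = (B \ A).card • v := by rw [hdiffcard]
      _ ≤ ∑ b ∈ B \ A, r b := h2
  calc trimmedSum h r = ∑ a ∈ A ∩ B, r a + ∑ a ∈ A \ B, r a := by
        rw [hsum, Finset.sum_inter_add_sum_sdiff]
    _ ≤ ∑ a ∈ A ∩ B, r a + ∑ b ∈ B \ A, r b := by linarith
    _ = ∑ a ∈ B ∩ A, r a + ∑ b ∈ B \ A, r b := by rw [Finset.inter_comm]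
    _ = ∑ b ∈ B, r b := Finset.sum_inter_add_sum_sdiff _ _ _

lemma single_le_trimmedSum {n h : ℕ} {r : Fin n → ℝ} (hr : ∀ i, 0 ≤ r i)
    {i : Fin n} (hi : (i : ℕ) < h) : r (Tuple.sort r i) ≤ trimmedSum h r :=
  Finset.single_le_sum (fun j _ => hr _)
    (Finset.mem_filter.mpr ⟨Finset.mem_univ _, hi⟩)

lemma euclNorm_le_l1norm {p : ℕ} (β : Fin p → ℝ) : euclNorm β ≤ l1norm β := by
  have h1 : ∑ j, β j ^ 2 ≤ (∑ j, |β j|) ^ 2 := by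
    calc ∑ j, β j ^ 2 = ∑ j, |β j| ^ 2 := by simp [sq_abs]
      _ ≤ (∑ j, |β j|) ^ 2 :=
        Finset.sum_sq_le_sq_sum_of_nonneg (fun i _ => abs_nonneg _)
  calc euclNorm β ≤ Real.sqrt ((∑ j, |β j|) ^ 2) := Real.sqrt_le_sqrt h1
    _ = ∑ j, |β j| := Real.sqrt_sq (Finset.sum_nonneg fun i _ => abs_nonneg _)
    _ = l1norm β := rfl

lemma abs_le_euclNorm {p : ℕ} (β : Fin p → ℝ) (j : Fin p) : |β j| ≤ euclNorm β := by
  have h1 : β j ^ 2 ≤ ∑ i, β i ^ 2 :=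
    Finset.single_le_sum (f := fun i => β i ^ 2) (fun i _ => sq_nonneg _) (Finset.mem_univ j)
  calc |β j| = Real.sqrt (β j ^ 2) := (Real.sqrt_sq_eq_abs _).symm
    _ ≤ euclNorm β := Real.sqrt_le_sqrt h1

section rho
variable {ρ : ℝ → ℝ} (hconv : ConvexOn ℝ Set.univ ρ) (hsym : ∀ x : ℝ, ρ (-x) = ρ x)
  (hzero : ρ 0 = 0)

include hconv hsym hzero

lemma rho_nonneg : ∀ x : ℝ, 0 ≤ ρ x := by
  intro x
  have h : ρ ((1/2 : ℝ) * x + (1/2 : ℝ) * (-x)) ≤ (1/2 : ℝ) * ρ x + (1/2 : ℝ) * ρ (-x) :=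
    hconv.2 (Set.mem_univ x) (Set.mem_univ (-x)) (by norm_num) (by norm_num) (by norm_num)
  have hx : (1/2 : ℝ) * x + (1/2 : ℝ) * (-x) = 0 := by ring
  rw [hx, hzero, hsym] at h
  linarith

lemma rho_mono : ∀ a b : ℝ, 0 ≤ a → a ≤ b → ρ a ≤ ρ b := by
  intro a b ha hab
  rcases eq_or_lt_of_le (ha.trans hab) with hb | hb
  · have : a = 0 := le_antisymm (hab.trans hb.symm.le) ha
    rw [this, ← hb]
  · have ht0 : 0 ≤ a / b := div_nonneg ha hb.le
    have ht1 : a / b ≤ 1 := div_le_one_of_le₀ hab hb.le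
    have h : ρ ((a/b) * b + (1 - a/b) * (0:ℝ)) ≤ (a/b) * ρ b + (1 - a/b) * ρ 0 :=
      hconv.2 (Set.mem_univ b) (Set.mem_univ (0:ℝ)) ht0 (by linarith) (by ring)
    have hx : (a / b) * b + (1 - a / b) * (0:ℝ) = a := by
      field_simp
      ring
    rw [hx, hzero] at h
    have hρb := rho_nonneg hconv hsym hzero b
    nlinarith

omit hconv hzero in
lemma rho_abs : ∀ x : ℝ, ρ x = ρ |x| := by
  intro x
  rcases abs_cases x with ⟨h1, _⟩ | ⟨h1, _⟩
  · rw [h1]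
  · rw [h1, hsym]

lemma rho_growth : ∀ c : ℝ, 1 ≤ c → c * ρ 1 ≤ ρ c := by
  intro c hc
  have hc0 : 0 < c := by linarith
  have hinv : 1/c ≤ 1 := by rw [div_le_one hc0]; linarith
  have h : ρ ((1/c) * c + (1 - 1/c) * (0:ℝ)) ≤ (1/c) * ρ c + (1 - 1/c) * ρ 0 :=
    hconv.2 (Set.mem_univ c) (Set.mem_univ (0:ℝ)) (by positivity) (by linarith) (by ring)
  have hx : (1/c) * c + (1 - 1/c) * (0:ℝ) = 1 := by field_simp; ring
  rw [hx, hzero] at h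
  have : c * ρ 1 ≤ c * ((1/c) * ρ c) := by
    apply mul_le_mul_of_nonneg_left _ hc0.le
    linarith
  calc c * ρ 1 ≤ c * ((1/c) * ρ c) := this
    _ = ρ c := by field_simp

end rho

/-- Theorem 1 of the paper: for a convex, symmetric loss `ρ` with `ρ(0) = 0` and `ρ(x) > 0`
for `x ≠ 0`, penalty parameter `λ > 0` and subset size `1 ≤ h ≤ n`, any estimator `est`
that, for every sample, minimizes the trimmed penalized objective `QGen ρ λ h` has
replacement finite-sample breakdown point `(n − h + 1)/n` at every sample `Z = (X, y)`. -/
theorem breakdown_point_trimmed_penalized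
    {n p h : ℕ} (hp : 1 ≤ p) (hh1 : 1 ≤ h) (hhn : h ≤ n)
    (ρ : ℝ → ℝ) (hconv : ConvexOn ℝ Set.univ ρ) (hsym : ∀ x : ℝ, ρ (-x) = ρ x)
    (hzero : ρ 0 = 0) (hpos : ∀ x : ℝ, x ≠ 0 → 0 < ρ x)
    (lam : ℝ) (hlam : 0 < lam)
    (est : (Fin n → Fin p → ℝ) → (Fin n → ℝ) → Fin p → ℝ)
    (hest : ∀ (X : Fin n → Fin p → ℝ) (y : Fin n → ℝ) (β : Fin p → ℝ),
      QGen ρ lam h X y (est X y) ≤ QGen ρ lam h X y β)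
    (X : Fin n → Fin p → ℝ) (y : Fin n → ℝ) :
    breakdownPoint est X y = ((n : ℝ) - h + 1) / n := by
  have hρnn := rho_nonneg hconv hsym hzero
  have hρ1 : 0 < ρ 1 := hpos 1 one_ne_zero
  have hlamh : 0 < (h:ℝ) * lam := by
    have : (0:ℝ) < (h:ℝ) := by exact_mod_cast hh1
    positivity
  set j0 : Fin p := ⟨0, hp⟩ with hj0
  -- Part 1: no breakdown when m ≤ n - h
  have hnb : ∀ m : ℕ, m ≤ n - h → ¬ BreaksDown est X y m := by
    intro m hm hbd
    set C : ℝ := ∑ i, ρ (y i) with hC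
    obtain ⟨X', y', ⟨s, hs, hcl⟩, hM⟩ := hbd (C / ((h:ℝ) * lam))
    have hscard : h ≤ sᶜ.card := by
      have h1 : sᶜ.card = n - s.card := by
        rw [Finset.card_compl, Fintype.card_fin]
      have h2 : s.card ≤ n := by
        simpa using Finset.card_le_univ s
      omega
    obtain ⟨B, hBsub, hBcard⟩ := Finset.exists_subset_card_eq hscard
    have hQ0 : QGen ρ lam h X' y' (fun _ => 0) = trimmedSum h (fun i => ρ (y' i)) := by
      simp [QGen, l1norm]
    have hts : trimmedSum h (fun i => ρ (y' i)) ≤ ∑ i ∈ B, ρ (y' i) :=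
      trimmedSum_le_sum hh1 hhn _ B hBcard
    have hBy : ∑ i ∈ B, ρ (y' i) = ∑ i ∈ B, ρ (y i) :=
      Finset.sum_congr rfl fun i hi => by
        rw [(hcl i (Finset.mem_compl.mp (hBsub hi))).2]
    have hBC : ∑ i ∈ B, ρ (y i) ≤ C :=
      Finset.sum_le_sum_of_subset_of_nonneg (Finset.subset_univ B)
        (fun i _ _ => hρnn _)
    have hQest := hest X' y' (fun _ => 0)
    have htnn : 0 ≤ trimmedSum h (fun i => ρ (y' i - ∑ j, X' i j * est X' y' j)) :=
      trimmedSum_nonneg (fun i => hρnn _)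
    have hl1 : (h:ℝ) * lam * l1norm (est X' y') ≤ C := by
      have : QGen ρ lam h X' y' (est X' y') ≤ C := by
        rw [hQ0] at hQest
        linarith
      rw [QGen] at this
      linarith
    have hle : euclNorm (est X' y') ≤ C / ((h:ℝ) * lam) := by
      have h1 := euclNorm_le_l1norm (est X' y')
      rw [le_div_iff₀ hlamh]
      calc euclNorm (est X' y') * ((h:ℝ) * lam) ≤ l1norm (est X' y') * ((h:ℝ) * lam) := by
            apply mul_le_mul_of_nonneg_right h1 hlamh.le
        _ = (h:ℝ) * lam * l1norm (est X' y') := by ring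
        _ ≤ C := hl1
    linarith
  -- Part 2: breakdown at m = n - h + 1
  have hbd : BreaksDown est X y (n - h + 1) := by
    intro M
    set cln : Finset (Fin n) := Finset.univ.filter (fun i : Fin n => (i:ℕ) < h - 1)
      with hcln_def
    set s : Finset (Fin n) := clnᶜ with hs_def
    have hclncard : cln.card = h - 1 := card_filter_lt (by omega)
    have hscard : s.card = n - h + 1 := by
      rw [hs_def, Finset.card_compl, Fintype.card_fin, hclncard]
      omega
    set b : ℝ := max M 0 + 1 with hb
    have hb0 : 0 < b := by
      have := le_max_right M (0:ℝ); rw [hb]; linarith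
    set β₀ : Fin p → ℝ := fun j => if j = j0 then b else 0 with hβ₀
    have hl1β₀ : l1norm β₀ = |b| := by
      simp [l1norm, hβ₀, apply_ite abs, abs_zero, Finset.sum_ite_eq']
    have hdot : ∀ (Z : Fin n → Fin p → ℝ) (i : Fin n), ∑ j, Z i j * β₀ j = Z i j0 * b := by
      intro Z i
      simp [hβ₀, mul_ite, mul_zero, Finset.sum_ite_eq']
    set CB : ℝ := ∑ i, ρ (y i - X i j0 * b) + (h:ℝ) * lam * |b| with hCB
    set c : ℝ := max 1 ((CB + 1) / ρ 1) with hc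
    have hc1 : (1:ℝ) ≤ c := le_max_left _ _
    have hc0 : (0:ℝ) < c := by linarith
    have hρc : CB < ρ c := by
      have h1 := rho_growth hconv hsym hzero c hc1
      have h2 : (CB + 1) / ρ 1 ≤ c := le_max_right _ _
      have h3 : ((CB + 1) / ρ 1) * ρ 1 ≤ c * ρ 1 :=
        mul_le_mul_of_nonneg_right h2 hρ1.le
      rw [div_mul_cancel₀ _ hρ1.ne'] at h3
      linarith
    set X' : Fin n → Fin p → ℝ :=
      fun i j => if i ∈ s then (if j = j0 then c else 0) else X i j with hX'
    set y' : Fin n → ℝ := fun i => if i ∈ s then c * b else y i with hy'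
    have hcorr : Corrupt (n - h + 1) X X' y y' :=
      ⟨s, le_of_eq hscard, fun i hi => ⟨fun j => if_neg hi, if_neg hi⟩⟩
    have hdotc : ∀ i ∈ s, ∀ β : Fin p → ℝ, ∑ j, X' i j * β j = c * β j0 := by
      intro i hi β
      simp [hX', if_pos hi, ite_mul, zero_mul, Finset.sum_ite_eq']
    -- bound QGen at β₀
    have hQβ₀ : QGen ρ lam h X' y' β₀ ≤ CB := by
      have hsne : s.Nonempty := Finset.card_pos.mp (by omega)
      obtain ⟨i₀, hi₀⟩ := hsne
      have hi₀c : i₀ ∉ cln := by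
        rw [hs_def] at hi₀; exact Finset.mem_compl.mp hi₀
      set B' : Finset (Fin n) := insert i₀ cln with hB'
      have hB'card : B'.card = h := by
        rw [hB', Finset.card_insert_of_notMem hi₀c, hclncard]; omega
      have hts : trimmedSum h (fun i => ρ (y' i - ∑ j, X' i j * β₀ j))
          ≤ ∑ i ∈ B', ρ (y' i - ∑ j, X' i j * β₀ j) :=
        trimmedSum_le_sum hh1 hhn _ B' hB'card
      have hri₀ : ρ (y' i₀ - ∑ j, X' i₀ j * β₀ j) = 0 := by
        rw [hdotc i₀ hi₀, hy']
        simp [if_pos hi₀, hβ₀, hzero]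
      have hsumB' : ∑ i ∈ B', ρ (y' i - ∑ j, X' i j * β₀ j)
          = ∑ i ∈ cln, ρ (y' i - ∑ j, X' i j * β₀ j) := by
        rw [hB', Finset.sum_insert hi₀c, hri₀, zero_add]
      have hcleanval : ∀ i ∈ cln, ρ (y' i - ∑ j, X' i j * β₀ j) = ρ (y i - X i j0 * b) := by
        intro i hi
        have his : i ∉ s := by rw [hs_def]; simpa using hi
        have hXi : ∀ j, X' i j = X i j := fun j => if_neg his
        have hyi : y' i = y i := if_neg his
        rw [hyi]
        have : ∑ j, X' i j * β₀ j = X i j0 * b := by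
          rw [show (fun j => X' i j * β₀ j) = fun j => X i j * β₀ j from
            funext fun j => by rw [hXi j]]
          exact hdot X i
        rw [this]
      have hsumcl : ∑ i ∈ cln, ρ (y' i - ∑ j, X' i j * β₀ j)
          = ∑ i ∈ cln, ρ (y i - X i j0 * b) := Finset.sum_congr rfl hcleanval
      have hsumle : ∑ i ∈ cln, ρ (y i - X i j0 * b) ≤ ∑ i, ρ (y i - X i j0 * b) :=
        Finset.sum_le_sum_of_subset_of_nonneg (Finset.subset_univ _)
          (fun i _ _ => hρnn _)
      rw [QGen, hl1β₀, hCB]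
      linarith [hts, hsumB' ▸ hsumcl]
    refine ⟨X', y', hcorr, ?_⟩
    by_contra hcon
    push_neg at hcon
    set βe : Fin p → ℝ := est X' y' with hβe
    have heste : |βe j0| ≤ M := le_trans (abs_le_euclNorm βe j0) hcon
    have hbe : 1 ≤ b - βe j0 := by
      have h1 : βe j0 ≤ |βe j0| := le_abs_self _
      have h2 := le_max_left M (0:ℝ)
      rw [hb]; linarith
    -- residual on corrupted points is large
    have hres : ∀ i ∈ s, ρ c ≤ ρ (y' i - ∑ j, X' i j * βe j) := by
      intro i hi
      rw [hdotc i hi]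
      simp only [hy']
      rw [if_pos hi]
      have hval : c * b - c * βe j0 = c * (b - βe j0) := by ring
      rw [hval]
      have habs : c ≤ |c * (b - βe j0)| := by
        rw [abs_mul, abs_of_pos hc0]
        have : 1 ≤ |b - βe j0| := le_trans hbe (le_abs_self _)
        nlinarith
      rw [rho_abs hsym (c * (b - βe j0))]
      exact rho_mono hconv hsym hzero c _ hc0.le habs
    -- some corrupted index is among the h smallest losses
    set r : Fin n → ℝ := fun i => ρ (y' i - ∑ j, X' i j * βe j) with hr
    have hexists : ∃ i : Fin n, (i:ℕ) < h ∧ Tuple.sort r i ∈ s := by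
      by_contra hno
      push_neg at hno
      have hsub : (Finset.univ.filter (fun i : Fin n => (i:ℕ) < h)).image (Tuple.sort r)
          ⊆ cln := by
        intro a ha
        rw [Finset.mem_image] at ha
        obtain ⟨i, hi, rfl⟩ := ha
        rw [Finset.mem_filter] at hi
        have := hno i hi.2
        rw [hs_def, Finset.mem_compl, not_not] at this
        exact this
      have hcard := Finset.card_le_card hsub
      rw [Finset.card_image_of_injective _ (Tuple.sort r).injective,
        card_filter_lt hhn, hclncard] at hcard
      omega
    obtain ⟨i₁, hi₁h, hi₁s⟩ := hexists
    have hsingle : r (Tuple.sort r i₁) ≤ trimmedSum h r :=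
      single_le_trimmedSum (r := r) (fun i => hρnn _) hi₁h
    have hlarge : ρ c ≤ trimmedSum h r :=
      le_trans (hres _ hi₁s) hsingle
    have hQest : QGen ρ lam h X' y' βe ≤ CB := le_trans (hest X' y' β₀) hQβ₀
    have hpen : 0 ≤ (h:ℝ) * lam * l1norm βe := by
      have : 0 ≤ l1norm βe := Finset.sum_nonneg fun i _ => abs_nonneg _
      positivity
    rw [QGen] at hQest
    have : trimmedSum h r ≤ CB := by
      rw [hr]; rw [hr] at hlarge; linarith [hQest, hpen]
    linarith
  -- conclude
  have hinf : sInf {m : ℕ | BreaksDown est X y m} = n - h + 1 := by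
    apply le_antisymm
    · exact Nat.sInf_le hbd
    · apply le_csInf ⟨_, hbd⟩
      intro m hm
      by_contra hlt
      push_neg at hlt
      exact hnb m (by omega) hm
  rw [breakdownPoint, hinf]
  have hcast : ((n - h + 1 : ℕ) : ℝ) = (n:ℝ) - h + 1 := by
    push_cast [Nat.cast_sub hhn]
    ring
  rw [hcast]
end

section
/- Fix a penalty parameter λ > 0. The lasso estimator is defined for a sample Z = (X, y) with X ∈ ℝ^{n×p}, y ∈ ℝ^n as a minimizer over β ∈ ℝ^p of Σ_{i=1}^{n} (y_i − x_i'β)² + n λ Σ_{j=1}^{p} |β_j|. Then for every sample Z, the replacement finite-sample breakdown point of the lasso equals 1/n; in particular, replacing a single observation by suitably chosen values can make the Euclidean norm of every lasso minimizer arbitrarily large. -/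
open Finset

/-- The lasso objective function `Σ_{i=1}^{n} (yᵢ − xᵢ'β)² + n λ Σ_j |β_j|`. -/
noncomputable def QLasso {n p : ℕ} (lam : ℝ)
    (X : Fin n → Fin p → ℝ) (y : Fin n → ℝ) (β : Fin p → ℝ) : ℝ :=
  ∑ i, (y i - ∑ j, X i j * β j) ^ 2 + (n : ℝ) * lam * l1norm β

private lemma lasso_key {n p : ℕ} (hn : 1 ≤ n) (hp : 1 ≤ p) (lam : ℝ) (hlam : 0 < lam)
    (X : Fin n → Fin p → ℝ) (y : Fin n → ℝ) (M : ℝ) :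
    ∃ X' y', Corrupt 1 X X' y y' ∧
      ∀ β : Fin p → ℝ, (∀ β' : Fin p → ℝ, QLasso lam X' y' β ≤ QLasso lam X' y' β') →
        M < euclNorm β := by
  set i0 : Fin n := ⟨0, hn⟩
  set j0 : Fin p := ⟨0, hp⟩
  set t : ℝ := |M| + 2 with ht
  have ht0 : 0 < t := by positivity
  set B : ℝ := ∑ i, (y i - t * X i j0) ^ 2 + (n : ℝ) * lam * t with hB
  have hB0 : 0 ≤ B := by positivity
  set c : ℝ := Real.sqrt B + 1 with hc
  have hc0 : 0 < c := by positivity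
  have hcB : B ≤ c ^ 2 := by
    have h1 : Real.sqrt B ^ 2 = B := Real.sq_sqrt hB0
    nlinarith [Real.sqrt_nonneg B]
  refine ⟨fun i j => if i = i0 then (if j = j0 then c else 0) else X i j,
    fun i => if i = i0 then c * t else y i, ⟨{i0}, by simp, ?_⟩, ?_⟩
  · intro i hi
    simp only [Finset.mem_singleton] at hi
    simp [hi]
  intro β hβ
  set X' : Fin n → Fin p → ℝ := fun i j => if i = i0 then (if j = j0 then c else 0) else X i j
  set y' : Fin n → ℝ := fun i => if i = i0 then c * t else y i
  set βs : Fin p → ℝ := fun j => if j = j0 then t else 0 with hβs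
  have hl1 : l1norm βs = t := by
    simp only [l1norm, βs]
    rw [Finset.sum_eq_single j0]
    · simp [abs_of_pos ht0]
    · intro b _ hb; simp [hb]
    · simp
  have hQs : QLasso lam X' y' βs ≤ B := by
    have hsum : ∀ i, (∑ j, X' i j * βs j) = t * X' i j0 := by
      intro i
      rw [Finset.sum_eq_single j0]
      · simp [βs, mul_comm]
      · intro b _ hb; simp [βs, hb]
      · simp
    simp only [QLasso, hl1]
    have : ∑ i, (y' i - ∑ j, X' i j * βs j) ^ 2 ≤ ∑ i, (y i - t * X i j0) ^ 2 := by
      apply Finset.sum_le_sum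
      intro i _
      rw [hsum i]
      by_cases h : i = i0
      · have hz : y' i - t * X' i j0 = 0 := by simp [X', y', h]; ring
        rw [hz]; simpa using sq_nonneg (y i - t * X i j0)
      · simp [X', y', h]
    linarith
  have hQβ : QLasso lam X' y' β ≤ B := le_trans (hβ βs) hQs
  have hlow : c ^ 2 * (t - β j0) ^ 2 ≤ QLasso lam X' y' β := by
    have hsum : (∑ j, X' i0 j * β j) = c * β j0 := by
      rw [Finset.sum_eq_single j0]
      · simp [X']
      · intro b _ hb; simp [X', hb]
      · simp
    have h1 : (y' i0 - ∑ j, X' i0 j * β j) ^ 2 ≤ ∑ i, (y' i - ∑ j, X' i j * β j) ^ 2 :=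
      Finset.single_le_sum (f := fun i => (y' i - ∑ j, X' i j * β j) ^ 2)
        (fun i _ => sq_nonneg _) (Finset.mem_univ i0)
    have h2 : (y' i0 - ∑ j, X' i0 j * β j) ^ 2 = c ^ 2 * (t - β j0) ^ 2 := by
      rw [hsum]; simp only [y', if_pos rfl]; ring
    have h3 : 0 ≤ (n : ℝ) * lam * l1norm β := by
      have : 0 ≤ l1norm β := Finset.sum_nonneg fun j _ => abs_nonneg _
      positivity
    simp only [QLasso]
    nlinarith
  have hsq : (t - β j0) ^ 2 ≤ 1 := by nlinarith [pow_pos hc0 2]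
  have hbj : t - 1 ≤ β j0 := by nlinarith
  have h4 : |β j0| ≤ euclNorm β := by
    have : β j0 ^ 2 ≤ ∑ j, β j ^ 2 :=
      Finset.single_le_sum (f := fun j => β j ^ 2) (fun j _ => sq_nonneg _) (Finset.mem_univ j0)
    calc |β j0| = Real.sqrt (β j0 ^ 2) := (Real.sqrt_sq_eq_abs _).symm
      _ ≤ euclNorm β := Real.sqrt_le_sqrt this
  have hMt : M < t - 1 := by
    have := le_abs_self M
    simp only [ht]; linarith
  calc M < t - 1 := hMt
    _ ≤ β j0 := hbj
    _ ≤ |β j0| := le_abs_self _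
    _ ≤ euclNorm β := h4

/-- The lasso estimator with penalty parameter `λ > 0`, i.e. any estimator that, for every
sample, minimizes the lasso objective, has replacement finite-sample breakdown point `1/n`
at every sample `Z = (X, y)`; in particular, replacing a single observation by suitably
chosen values can make the Euclidean norm of every lasso minimizer arbitrarily large. -/
theorem breakdown_point_lasso
    {n p : ℕ} (hn : 1 ≤ n) (hp : 1 ≤ p)
    (lam : ℝ) (hlam : 0 < lam)
    (est : (Fin n → Fin p → ℝ) → (Fin n → ℝ) → Fin p → ℝ)
    (hest : ∀ (X : Fin n → Fin p → ℝ) (y : Fin n → ℝ) (β : Fin p → ℝ),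
      QLasso lam X y (est X y) ≤ QLasso lam X y β)
    (X : Fin n → Fin p → ℝ) (y : Fin n → ℝ) :
    breakdownPoint est X y = 1 / n ∧
    ∀ M : ℝ, ∃ X' y', Corrupt 1 X X' y y' ∧
      ∀ β : Fin p → ℝ, (∀ β' : Fin p → ℝ, QLasso lam X' y' β ≤ QLasso lam X' y' β') →
        M < euclNorm β := by
  have key := fun M => lasso_key hn hp lam hlam X y M
  constructor
  · have h1 : BreaksDown est X y 1 := by
      intro M
      obtain ⟨X', y', hc, h⟩ := key M
      exact ⟨X', y', hc, h (est X' y') (hest X' y')⟩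
    have h0 : ¬ BreaksDown est X y 0 := by
      intro h
      obtain ⟨X', y', ⟨s, hs, hfix⟩, hlt⟩ := h (euclNorm (est X y))
      have hse : s = ∅ := Finset.card_eq_zero.mp (Nat.le_zero.mp hs)
      subst hse
      have hX : X' = X := by
        funext i j; exact (hfix i (Finset.notMem_empty i)).1 j
      have hy : y' = y := by
        funext i; exact (hfix i (Finset.notMem_empty i)).2
      rw [hX, hy] at hlt
      exact lt_irrefl _ hlt
    have hinf : sInf {m : ℕ | BreaksDown est X y m} = 1 := by
      have hle : sInf {m : ℕ | BreaksDown est X y m} ≤ 1 := Nat.sInf_le h1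
      have hmem := Nat.sInf_mem (⟨1, h1⟩ : {m : ℕ | BreaksDown est X y m}.Nonempty)
      have hne : sInf {m : ℕ | BreaksDown est X y m} ≠ 0 := by
        intro h; rw [h] at hmem; exact h0 hmem
      omega
    rw [breakdownPoint, hinf, Nat.cast_one]
  · exact key
end

section
/- Fix a penalty parameter λ > 0. The LAD-lasso estimator is defined for a sample Z = (X, y) with X ∈ ℝ^{n×p}, y ∈ ℝ^n as a minimizer over β ∈ ℝ^p of Σ_{i=1}^{n} |y_i − x_i'β| + n λ Σ_{j=1}^{p} |β_j|. Then for every sample Z, the replacement finite-sample breakdown point of the LAD-lasso equals 1/n; in particular, replacing a single observation by suitably chosen values can make the Euclidean norm of every LAD-lasso minimizer arbitrarily large. -/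
open Finset

/-- The LAD-lasso objective function `Σ_{i=1}^{n} |yᵢ − xᵢ'β| + n λ Σ_j |β_j|`. -/
noncomputable def QLADLasso {n p : ℕ} (lam : ℝ)
    (X : Fin n → Fin p → ℝ) (y : Fin n → ℝ) (β : Fin p → ℝ) : ℝ :=
  ∑ i, |y i - ∑ j, X i j * β j| + (n : ℝ) * lam * l1norm β

private lemma LADlasso_key {n p : ℕ} (hn : 1 ≤ n) (hp : 1 ≤ p) (lam : ℝ) (hlam : 0 < lam)
    (X : Fin n → Fin p → ℝ) (y : Fin n → ℝ) (M : ℝ) :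
    ∃ X' y', Corrupt 1 X X' y y' ∧
      ∀ β : Fin p → ℝ, (∀ β' : Fin p → ℝ, QLADLasso lam X' y' β ≤ QLADLasso lam X' y' β') →
        M < euclNorm β := by
  set i0 : Fin n := ⟨0, hn⟩
  set j0 : Fin p := ⟨0, hp⟩
  set A : ℝ := ∑ i, |y i| with hA
  set B : ℝ := (∑ i, |X i j0|) + (n : ℝ) * lam with hB
  have hApos : 0 ≤ A := Finset.sum_nonneg fun i _ => abs_nonneg _
  have hBpos : 0 < B := by
    have : 0 ≤ ∑ i, |X i j0| := Finset.sum_nonneg fun i _ => abs_nonneg _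
    have hn' : (1:ℝ) ≤ n := by exact_mod_cast hn
    nlinarith
  set t : ℝ := max (2*M+1) 1 with ht
  have htpos : (0:ℝ) < t := lt_of_lt_of_le one_pos (le_max_right _ _)
  have htM : M < t / 2 := by
    have : 2*M+1 ≤ t := le_max_left _ _
    linarith
  set c : ℝ := 2 * (A + B * t) / t with hc
  have hABt : 0 < A + B * t := by nlinarith
  have hcpos : 0 < c := by positivity
  refine ⟨fun i j => if i = i0 then (if j = j0 then c else 0) else X i j,
          fun i => if i = i0 then c * t else y i, ⟨{i0}, by simp, ?_⟩, ?_⟩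
  · intro i hi
    simp only [Finset.mem_singleton] at hi
    refine ⟨fun j => ?_, ?_⟩ <;> simp [hi]
  · intro β hβ
    set X' : Fin n → Fin p → ℝ := fun i j => if i = i0 then (if j = j0 then c else 0) else X i j
    set y' : Fin n → ℝ := fun i => if i = i0 then c * t else y i
    -- upper bound on Q at β* = t·e_{j0}
    have hQub : QLADLasso lam X' y' (fun j => if j = j0 then t else 0) ≤ A + B * t := by
      have hl1 : l1norm (fun j => if j = j0 then t else 0) = t := by
        simp only [l1norm]
        rw [Finset.sum_eq_single j0]
        · simp [abs_of_pos htpos]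
        · intro b _ hb; simp [hb]
        · simp
      have hdot : ∀ i, (∑ j, X' i j * (if j = j0 then t else 0)) =
          if i = i0 then c * t else X i j0 * t := by
        intro i
        rw [Finset.sum_eq_single j0]
        · by_cases h : i = i0 <;> simp [X', h]
        · intro b _ hb; simp [hb]
        · simp
      have hterm : ∀ i ∈ Finset.univ, |y' i - ∑ j, X' i j * (if j = j0 then t else 0)| ≤
          |y i| + |X i j0| * t := by
        intro i _
        rw [hdot i]
        by_cases h : i = i0
        · simp [y', h]
          positivity
        · simp only [y', h, if_neg h]
          calc |y i - X i j0 * t| ≤ |y i| + |X i j0 * t| := abs_sub _ _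
            _ = |y i| + |X i j0| * t := by rw [abs_mul, abs_of_pos htpos]
      calc QLADLasso lam X' y' (fun j => if j = j0 then t else 0)
          ≤ (∑ i, (|y i| + |X i j0| * t)) + (n:ℝ) * lam * t := by
            rw [QLADLasso, hl1]
            exact add_le_add (Finset.sum_le_sum hterm) le_rfl
        _ = A + B * t := by
            rw [Finset.sum_add_distrib, ← Finset.sum_mul]
            ring
    -- lower bound on Q at β
    have hdotβ : (∑ j, X' i0 j * β j) = c * β j0 := by
      rw [Finset.sum_eq_single j0]
      · simp [X']
      · intro b _ hb; simp [X', hb]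
      · simp
    have hlb : c * |t - β j0| ≤ QLADLasso lam X' y' β := by
      have h1 : |y' i0 - ∑ j, X' i0 j * β j| = c * |t - β j0| := by
        rw [hdotβ]
        simp only [y', if_pos rfl]
        rw [← mul_sub, abs_mul, abs_of_pos hcpos]
      have h2 : |y' i0 - ∑ j, X' i0 j * β j| ≤ ∑ i, |y' i - ∑ j, X' i j * β j| :=
        Finset.single_le_sum (f := fun i => |y' i - ∑ j, X' i j * β j|)
          (fun i _ => abs_nonneg _) (Finset.mem_univ i0)
      have h3 : 0 ≤ (n:ℝ) * lam * l1norm β := by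
        have : 0 ≤ l1norm β := Finset.sum_nonneg fun j _ => abs_nonneg _
        positivity
      rw [QLADLasso, ← h1]
      linarith
    have hQβ := le_trans hlb (le_trans (hβ _) hQub)
    -- c * |t - β j0| ≤ A + B t = c * t / 2
    have hct : A + B * t = c * t / 2 := by
      field_simp [hc]
      rw [hc]; field_simp [htpos.ne']
    have habs : |t - β j0| ≤ t / 2 := by
      rw [hct] at hQβ
      nlinarith [abs_nonneg (t - β j0)]
    have hβj0 : t / 2 ≤ β j0 := by
      have := abs_le.mp habs
      linarith [this.2]
    have hnorm : β j0 ≤ euclNorm β := by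
      have h1 : β j0 ≤ |β j0| := le_abs_self _
      have h2 : |β j0| = Real.sqrt (β j0 ^ 2) := (Real.sqrt_sq_eq_abs _).symm
      have h3 : Real.sqrt (β j0 ^ 2) ≤ euclNorm β := by
        apply Real.sqrt_le_sqrt
        exact Finset.single_le_sum (fun j _ => sq_nonneg (β j)) (Finset.mem_univ j0)
      linarith
    linarith

/-- The LAD-lasso estimator with penalty parameter `λ > 0`, i.e. any estimator that, for
every sample, minimizes the LAD-lasso objective, has replacement finite-sample breakdown
point `1/n` at every sample `Z = (X, y)`; in particular, replacing a single observation by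
suitably chosen values can make the Euclidean norm of every LAD-lasso minimizer arbitrarily
large. -/
theorem breakdown_point_LADlasso
    {n p : ℕ} (hn : 1 ≤ n) (hp : 1 ≤ p)
    (lam : ℝ) (hlam : 0 < lam)
    (est : (Fin n → Fin p → ℝ) → (Fin n → ℝ) → Fin p → ℝ)
    (hest : ∀ (X : Fin n → Fin p → ℝ) (y : Fin n → ℝ) (β : Fin p → ℝ),
      QLADLasso lam X y (est X y) ≤ QLADLasso lam X y β)
    (X : Fin n → Fin p → ℝ) (y : Fin n → ℝ) :
    breakdownPoint est X y = 1 / n ∧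
    ∀ M : ℝ, ∃ X' y', Corrupt 1 X X' y y' ∧
      ∀ β : Fin p → ℝ, (∀ β' : Fin p → ℝ, QLADLasso lam X' y' β ≤ QLADLasso lam X' y' β') →
        M < euclNorm β := by
  have hkey := LADlasso_key hn hp lam hlam X y
  constructor
  · -- breakdown point equals 1/n
    have h1 : BreaksDown est X y 1 := by
      intro M
      obtain ⟨X', y', hcor, hmin⟩ := hkey M
      exact ⟨X', y', hcor, hmin (est X' y') (hest X' y')⟩
    have h0 : ¬ BreaksDown est X y 0 := by
      intro h
      obtain ⟨X', y', ⟨s, hs, hfix⟩, hM⟩ := h (euclNorm (est X y))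
      have hs0 : s = ∅ := Finset.card_eq_zero.mp (Nat.le_zero.mp hs)
      have hX : X' = X := by
        funext i j; exact (hfix i (by simp [hs0])).1 j
      have hy : y' = y := by
        funext i; exact (hfix i (by simp [hs0])).2
      rw [hX, hy] at hM
      exact lt_irrefl _ hM
    have hsInf : sInf {m : ℕ | BreaksDown est X y m} = 1 := by
      refine le_antisymm (Nat.sInf_le h1) ?_
      rw [Nat.one_le_iff_ne_zero]
      intro heq
      rcases Nat.sInf_eq_zero.mp heq with h | h
      · exact h0 h
      · exact absurd h1 (by simp [Set.eq_empty_iff_forall_notMem] at h; exact h 1)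
    rw [breakdownPoint, hsInf]
    norm_num
  · exact hkey
end

section
/- Let ρ: ℝ → ℝ be convex, symmetric, with ρ(0) = 0 and ρ(x) > 0 for x ≠ 0, let λ > 0 and 1 ≤ h ≤ n. Let Z̃ = (X̃, ỹ) be a sample of n observations and suppose at least h of the values ỹ_i satisfy |ỹ_i| ≤ M_y for some constant M_y ≥ 0. Then every minimizer β̂ of Q_{Z̃}(β) = Σ_{i=1}^{h} (ρ(ỹ − X̃β))_{i:n} + h λ Σ_{j=1}^{p} |β_j| satisfies λ ‖β̂‖₁ ≤ ρ(M_y); in particular ‖β̂‖₂ ≤ ‖β̂‖₁ ≤ ρ(M_y)/λ. -/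
open Finset

lemma orderStat_le_of_card {n h : ℕ} (r : Fin n → ℝ) (c : ℝ)
    (hc : h ≤ (Finset.univ.filter (fun i : Fin n => r i ≤ c)).card)
    (i : Fin n) (hi : (i : ℕ) < h) : orderStat r i ≤ c := by
  by_contra hlt
  push_neg at hlt
  set σ := Tuple.sort r with hσ
  have hmono : Monotone (r ∘ σ) := Tuple.monotone_sort r
  have hcard : (Finset.univ.filter (fun k : Fin n => r (σ k) ≤ c)).card
      = (Finset.univ.filter (fun i : Fin n => r i ≤ c)).card := by
    apply Finset.card_equiv σ
    intro k
    simp [Finset.mem_filter]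
  have hsub : (Finset.univ.filter (fun k : Fin n => r (σ k) ≤ c)) ⊆
      (Finset.univ.filter (fun k : Fin n => (k : ℕ) < (i : ℕ))) := by
    intro k hk
    simp only [Finset.mem_filter, Finset.mem_univ, true_and] at hk ⊢
    by_contra hki
    push_neg at hki
    have : r (σ i) ≤ r (σ k) := hmono (by exact_mod_cast hki)
    have : c < r (σ k) := lt_of_lt_of_le hlt this
    linarith
  have hle : (Finset.univ.filter (fun k : Fin n => (k : ℕ) < (i : ℕ))).card ≤ (i : ℕ) := by
    have := Finset.card_le_card_of_injOn (s := Finset.univ.filter (fun k : Fin n => (k : ℕ) < (i : ℕ))) (t := Finset.range (i : ℕ)) (fun k : Fin n => (k : ℕ))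
      (fun k hk => by
        simp at hk
        simpa [Finset.mem_range] using hk)
      (fun a _ b _ hab => Fin.ext hab)
    simpa using this
  have := hc.trans hcard.ge
  have := (Finset.card_le_card hsub).trans hle
  omega

lemma card_filter_lt_le {n h : ℕ} :
    (Finset.univ.filter (fun i : Fin n => (i : ℕ) < h)).card ≤ h := by
  have := Finset.card_le_card_of_injOn (s := Finset.univ.filter (fun i : Fin n => (i : ℕ) < h)) (t := Finset.range h) (fun k : Fin n => (k : ℕ))
    (fun k hk => by
      simp at hk
      simpa [Finset.mem_range] using hk)
    (fun a _ b _ hab => Fin.ext hab)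
  simpa using this

/-- If at least `h` of the responses `ỹᵢ` of a sample `Z̃ = (X̃, ỹ)` satisfy `|ỹᵢ| ≤ M_y`,
then every minimizer `β̂` of the trimmed penalized objective with convex symmetric loss `ρ`
(`ρ(0) = 0`, `ρ(x) > 0` for `x ≠ 0`), penalty `λ > 0` and subset size `1 ≤ h ≤ n` satisfies
`λ ‖β̂‖₁ ≤ ρ(M_y)`; in particular `‖β̂‖₂ ≤ ‖β̂‖₁ ≤ ρ(M_y)/λ`. -/
theorem trimmed_penalized_minimizer_bound
    {n p h : ℕ} (hh1 : 1 ≤ h) (hhn : h ≤ n)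
    (ρ : ℝ → ℝ) (hconv : ConvexOn ℝ Set.univ ρ) (hsym : ∀ x : ℝ, ρ (-x) = ρ x)
    (hzero : ρ 0 = 0) (hpos : ∀ x : ℝ, x ≠ 0 → 0 < ρ x)
    (lam : ℝ) (hlam : 0 < lam)
    (X : Fin n → Fin p → ℝ) (y : Fin n → ℝ)
    (My : ℝ) (hMy : 0 ≤ My)
    (hmany : h ≤ (Finset.univ.filter (fun i : Fin n => |y i| ≤ My)).card) :
    ∀ βhat : Fin p → ℝ,
      (∀ β : Fin p → ℝ, QGen ρ lam h X y βhat ≤ QGen ρ lam h X y β) →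
      lam * l1norm βhat ≤ ρ My ∧ euclNorm βhat ≤ l1norm βhat ∧
        l1norm βhat ≤ ρ My / lam := by
  intro βhat hmin
  -- ρ is nonnegative
  have hnn : ∀ x : ℝ, 0 ≤ ρ x := by
    intro x
    rcases eq_or_ne x 0 with hx | hx
    · simp [hx, hzero]
    · exact (hpos x hx).le
  -- ρ is monotone on [0, ∞)
  have hmonoρ : ∀ a b : ℝ, 0 ≤ a → a ≤ b → ρ a ≤ ρ b := by
    intro a b ha hab
    rcases eq_or_lt_of_le (ha.trans hab) with hb | hb
    · have : a = 0 := le_antisymm (hab.trans hb.symm.le) ha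
      rw [this, ← hb]
    · set t : ℝ := (a + b) / (2 * b) with ht
      have ht0 : 0 ≤ t := by positivity
      have ht1 : t ≤ 1 := by
        rw [ht, div_le_one (by positivity)]; linarith
      have hcomb : t * b + (1 - t) * (-b) = a := by
        have h2 : t * (2 * b) = a + b := div_mul_cancel₀ (a + b) (by positivity : (2 * b) ≠ 0)
        linear_combination h2
      have := hconv.2 (Set.mem_univ b) (Set.mem_univ (-b)) ht0
        (sub_nonneg.mpr ht1) (by ring : t + (1 - t) = 1)
      simp only [smul_eq_mul, hcomb, hsym] at this
      calc ρ a ≤ t * ρ b + (1 - t) * ρ b := this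
        _ = ρ b := by ring
  -- Q(βhat) ≤ Q(0)
  have h0 : QGen ρ lam h X y βhat ≤ QGen ρ lam h X y 0 := hmin 0
  -- compute Q(0)
  have hQ0 : QGen ρ lam h X y 0 = trimmedSum h (fun i => ρ (y i)) := by
    simp [QGen, l1norm]
  -- trimmedSum at 0 is ≤ h * ρ My
  have hbound : trimmedSum h (fun i => ρ (y i)) ≤ (h : ℝ) * ρ My := by
    have hcard : h ≤ (Finset.univ.filter (fun i : Fin n => ρ (y i) ≤ ρ My)).card := by
      refine hmany.trans (Finset.card_le_card ?_)
      intro i hi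
      simp only [Finset.mem_filter, Finset.mem_univ, true_and] at hi ⊢
      have : ρ (y i) = ρ |y i| := by
        rcases abs_cases (y i) with ⟨h1, _⟩ | ⟨h1, _⟩
        · rw [h1]
        · rw [h1, hsym]
      rw [this]
      exact hmonoρ _ _ (abs_nonneg _) hi
    calc trimmedSum h (fun i => ρ (y i))
        ≤ ∑ _i ∈ Finset.univ.filter (fun i : Fin n => (i : ℕ) < h), ρ My := by
          refine Finset.sum_le_sum (fun i hi => ?_)
          simp only [Finset.mem_filter, Finset.mem_univ, true_and] at hi
          exact orderStat_le_of_card _ _ hcard i hi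
      _ = ((Finset.univ.filter (fun i : Fin n => (i : ℕ) < h)).card : ℝ) * ρ My := by
          rw [Finset.sum_const, nsmul_eq_mul]
      _ ≤ (h : ℝ) * ρ My := by
          apply mul_le_mul_of_nonneg_right _ (hnn My)
          exact_mod_cast card_filter_lt_le
  -- trimmedSum at βhat is ≥ 0
  have hnn' : 0 ≤ trimmedSum h (fun i => ρ (y i - ∑ j, X i j * βhat j)) :=
    Finset.sum_nonneg (fun i _ => hnn _)
  -- combine
  have hkey : (h : ℝ) * lam * l1norm βhat ≤ (h : ℝ) * ρ My := by
    have := h0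
    rw [hQ0] at this
    unfold QGen at this
    linarith
  have hhpos : (0 : ℝ) < h := by exact_mod_cast hh1
  have h1 : lam * l1norm βhat ≤ ρ My := by
    have := (mul_le_mul_iff_right₀ hhpos).mp (by linarith [hkey] : (h : ℝ) * (lam * l1norm βhat) ≤ (h : ℝ) * ρ My)
    exact this
  refine ⟨h1, ?_, ?_⟩
  · -- euclNorm ≤ l1norm
    unfold euclNorm l1norm
    have hsq : ∑ j, (βhat j) ^ 2 ≤ (∑ j, |βhat j|) ^ 2 := by
      calc ∑ j, (βhat j) ^ 2 = ∑ j, |βhat j| ^ 2 := by simp [sq_abs]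
        _ ≤ (∑ j, |βhat j|) ^ 2 :=
          Finset.sum_sq_le_sq_sum_of_nonneg (fun j _ => abs_nonneg _)
    calc Real.sqrt (∑ j, (βhat j) ^ 2) ≤ Real.sqrt ((∑ j, |βhat j|) ^ 2) :=
          Real.sqrt_le_sqrt hsq
      _ = ∑ j, |βhat j| := Real.sqrt_sq (Finset.sum_nonneg fun j _ => abs_nonneg _)
  · rw [le_div_iff₀ hlam]
    linarith [h1]
end

section
/- Let ρ: ℝ → ℝ be convex, symmetric, with ρ(0) = 0 and ρ(x) > 0 for x ≠ 0, let λ > 0 and 1 ≤ h ≤ n. Let Z = (X, y) be a sample with M_y = max_{1≤i≤n} |y_i| and M_{x₁} = max_{1≤i≤n} |x_{i1}|. Fix γ > 0 and τ > 0, and let Z̃ = Z_{γ,τ} be obtained from Z by replacing the last m = n − h + 1 observations by the point z(γ, τ) = ((τ, 0, …, 0)', γτ). Then for β_γ = (γ, 0, …, 0)' ∈ ℝ^p, the objective Q_{Z̃}(β) = Σ_{i=1}^{h} (ρ(ỹ − X̃β))_{i:n} + h λ Σ_{j=1}^{p} |β_j| satisfies Q_{Z̃}(β_γ) ≤ max(h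 − m, 0)·ρ(M_y + γ M_{x₁}) + h λ γ. -/
open Finset

/-- The design matrix obtained from `X` by replacing the last `n − h + 1` observations
(indices `i ≥ h − 1`) by the predictor vector `x(τ) = (τ, 0, …, 0)'`. -/
noncomputable def contamX {n p : ℕ} (h : ℕ) (X : Fin n → Fin p → ℝ) (τ : ℝ) :
    Fin n → Fin p → ℝ :=
  fun i j => if (i : ℕ) < h - 1 then X i j else if (j : ℕ) = 0 then τ else 0

/-- The response vector obtained from `y` by replacing the last `n − h + 1` observations
(indices `i ≥ h − 1`) by the response `y(γ, τ) = γτ`. -/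
noncomputable def contamY {n : ℕ} (h : ℕ) (y : Fin n → ℝ) (γ τ : ℝ) : Fin n → ℝ :=
  fun i => if (i : ℕ) < h - 1 then y i else γ * τ

lemma orderStat_eq_zero {n : ℕ} (r : Fin n → ℝ) (hr : ∀ i, 0 ≤ r i)
    (s : Finset (Fin n)) (hs : ∀ i ∈ s, r i = 0) (i : Fin n) (hi : (i : ℕ) < s.card) :
    orderStat r i = 0 := by
  by_contra hne
  have hpos : 0 < r (Tuple.sort r i) := lt_of_le_of_ne (hr _) (Ne.symm hne)
  have hmono : Monotone (r ∘ Tuple.sort r) := Tuple.monotone_sort r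
  have key : ∀ j : Fin n, i ≤ j → 0 < r (Tuple.sort r j) := fun j hj =>
    lt_of_lt_of_le hpos (hmono hj)
  set t := (Finset.Ici i).image (Tuple.sort r) with ht
  have hcard_t : t.card = n - (i : ℕ) := by
    rw [ht, Finset.card_image_of_injective _ (Tuple.sort r).injective, Fin.card_Ici]
  have hdisj : Disjoint s t := by
    rw [Finset.disjoint_right]
    intro x hx hxs
    rw [ht, Finset.mem_image] at hx
    obtain ⟨j, hj, rfl⟩ := hx
    exact absurd (hs _ hxs) (ne_of_gt (key j (Finset.mem_Ici.mp hj)))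
  have hle : (s ∪ t).card ≤ n := by
    simpa using Finset.card_le_card (Finset.subset_univ (s ∪ t))
  rw [Finset.card_union_of_disjoint hdisj, hcard_t] at hle
  have := i.isLt
  omega

lemma trimmedSum_le {n h : ℕ} (hhn : h ≤ n) (r : Fin n → ℝ) (hr : ∀ i, 0 ≤ r i)
    (B : ℝ) (hB : ∀ i, r i ≤ B) (s : Finset (Fin n)) (hs : ∀ i ∈ s, r i = 0) :
    trimmedSum h r ≤ ((h - s.card : ℕ) : ℝ) * B := by
  set m := s.card with hm
  have step : trimmedSum h r ≤
      ∑ i ∈ Finset.univ.filter (fun i : Fin n => (i : ℕ) < h),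
        (if (i : ℕ) < m then (0 : ℝ) else B) := by
    apply Finset.sum_le_sum
    intro i hi
    by_cases hcase : (i : ℕ) < m
    · rw [if_pos hcase, orderStat_eq_zero r hr s hs i hcase]
    · rw [if_neg hcase]; exact hB _
  refine step.trans ?_
  rw [Finset.sum_ite]
  simp only [Finset.sum_const_zero, zero_add, Finset.sum_const, nsmul_eq_mul]
  rw [Finset.filter_filter]
  have himg : (Finset.univ.filter (fun i : Fin n => (i:ℕ) < h ∧ ¬ (i:ℕ) < m)).image
      Fin.val = Finset.Ico m h := by
    ext k
    simp only [Finset.mem_image, Finset.mem_filter, Finset.mem_univ, true_and, Finset.mem_Ico]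
    constructor
    · rintro ⟨j, ⟨h1, h2⟩, rfl⟩; omega
    · rintro ⟨h1, h2⟩
      refine ⟨⟨k, lt_of_lt_of_le h2 hhn⟩, ⟨?_, ?_⟩, rfl⟩ <;> simp <;> omega
  have hcard : (Finset.univ.filter (fun i : Fin n => (i:ℕ) < h ∧ ¬ (i:ℕ) < m)).card
      = h - m := by
    rw [← Finset.card_image_of_injective _ Fin.val_injective, himg, Nat.card_Ico]
  rw [hcard]

lemma rho_mono_s7 {ρ : ℝ → ℝ} (hconv : ConvexOn ℝ Set.univ ρ) (hzero : ρ 0 = 0)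
    (hnn : ∀ x, 0 ≤ ρ x) {a b : ℝ} (ha : 0 ≤ a) (hab : a ≤ b) : ρ a ≤ ρ b := by
  rcases eq_or_lt_of_le (ha.trans hab) with hb | hb
  · have : a = 0 := le_antisymm (hab.trans hb.symm.le) ha
    rw [this, ← hb, hzero]
  · have ht0 : 0 ≤ a / b := div_nonneg ha hb.le
    have ht1 : a / b ≤ 1 := div_le_one_of_le₀ hab hb.le
    have key := hconv.2 (Set.mem_univ b) (Set.mem_univ (0:ℝ))
      (show (0:ℝ) ≤ a / b from ht0) (show (0:ℝ) ≤ 1 - a / b by linarith)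
      (show a / b + (1 - a / b) = 1 by ring)
    rw [smul_eq_mul, smul_zero, add_zero, div_mul_cancel₀ _ (ne_of_gt hb),
      smul_eq_mul, hzero, smul_zero, add_zero] at key
    calc ρ a ≤ a / b * ρ b := key
      _ ≤ 1 * ρ b := mul_le_mul_of_nonneg_right ht1 (hnn b)
      _ = ρ b := one_mul _

/-- Inequality (A.2) of the paper: with `M_y = max_i |yᵢ|`, `M_{x₁} = max_i |x_{i1}|`, and
`Z̃ = Z_{γ,τ}` obtained from `Z` by replacing the last `m = n − h + 1` observations by
`z(γ, τ) = ((τ, 0, …, 0)', γτ)`, the trimmed penalized objective at `β_γ = (γ, 0, …, 0)'`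
satisfies `Q_Z̃(β_γ) ≤ max(h − m, 0)·ρ(M_y + γ M_{x₁}) + h λ γ`. -/
theorem objective_bound_at_beta_gamma
    {n p h : ℕ} (hp : 1 ≤ p) (hh1 : 1 ≤ h) (hhn : h ≤ n)
    (ρ : ℝ → ℝ) (hconv : ConvexOn ℝ Set.univ ρ) (hsym : ∀ x : ℝ, ρ (-x) = ρ x)
    (hzero : ρ 0 = 0) (hpos : ∀ x : ℝ, x ≠ 0 → 0 < ρ x)
    (lam : ℝ) (hlam : 0 < lam)
    (X : Fin n → Fin p → ℝ) (y : Fin n → ℝ)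
    (My Mx1 : ℝ)
    (hMy : IsGreatest (Set.range fun i : Fin n => |y i|) My)
    (hMx1 : IsGreatest (Set.range fun i : Fin n => |X i ⟨0, hp⟩|) Mx1)
    (γ τ : ℝ) (hγ : 0 < γ) (hτ : 0 < τ) :
    QGen ρ lam h (contamX h X τ) (contamY h y γ τ)
        (fun j : Fin p => if (j : ℕ) = 0 then γ else 0) ≤
      max ((h : ℝ) - ((n : ℝ) - h + 1)) 0 * ρ (My + γ * Mx1) + (h : ℝ) * lam * γ := by
  classical
  have hn1 : 1 ≤ n := le_trans hh1 hhn
  set β : Fin p → ℝ := fun j => if (j : ℕ) = 0 then γ else 0 with hβ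
  have hnn : ∀ x, 0 ≤ ρ x := by
    intro x
    rcases eq_or_ne x 0 with rfl | hx
    · exact le_of_eq hzero.symm
    · exact (hpos x hx).le
  -- bounds are nonnegative
  have hMy0 : 0 ≤ My := le_trans (abs_nonneg _) (hMy.2 ⟨⟨0, by omega⟩, rfl⟩)
  have hMx0 : 0 ≤ Mx1 := le_trans (abs_nonneg _) (hMx1.2 ⟨⟨0, by omega⟩, rfl⟩)
  set Barg : ℝ := My + γ * Mx1 with hBarg
  have hBarg0 : 0 ≤ Barg := by positivity
  -- monotone-in-|x| property of ρ
  have habs : ∀ x : ℝ, |x| ≤ Barg → ρ x ≤ ρ Barg := by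
    intro x hx
    have hx' : ρ x = ρ |x| := by
      rcases abs_cases x with ⟨he, _⟩ | ⟨he, _⟩
      · rw [he]
      · rw [he, hsym]
    rw [hx']
    exact rho_mono_s7 hconv hzero hnn (abs_nonneg x) hx
  -- the inner sum
  have hsum : ∀ i, (∑ j, contamX h X τ i j * β j) = contamX h X τ i ⟨0, hp⟩ * γ := by
    intro i
    rw [Finset.sum_eq_single (⟨0, hp⟩ : Fin p)]
    · simp [hβ]
    · intro j _ hj
      have hjv : (j : ℕ) ≠ 0 := fun hc => hj (Fin.ext hc)
      simp [hβ, hjv]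
    · simp
  set r : Fin n → ℝ := fun i => ρ (contamY h y γ τ i - ∑ j, contamX h X τ i j * β j)
    with hrdef
  set s : Finset (Fin n) := Finset.univ.filter (fun i : Fin n => ¬ (i : ℕ) < h - 1)
    with hsdef
  have hs0 : ∀ i ∈ s, r i = 0 := by
    intro i hi
    rw [hsdef, Finset.mem_filter] at hi
    have hge : ¬ (i : ℕ) < h - 1 := hi.2
    show ρ (contamY h y γ τ i - ∑ j, contamX h X τ i j * β j) = 0
    rw [hsum i]
    simp only [contamY, contamX, if_neg hge]
    norm_num
    have hz : γ * τ - τ * γ = 0 := by ring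
    rw [hz, hzero]
  have hrle : ∀ i, r i ≤ ρ Barg := by
    intro i
    by_cases hcase : (i : ℕ) < h - 1
    · show ρ (contamY h y γ τ i - ∑ j, contamX h X τ i j * β j) ≤ ρ Barg
      rw [hsum i]
      simp only [contamY, contamX, if_pos hcase]
      apply habs
      have h1 : |y i| ≤ My := hMy.2 ⟨i, rfl⟩
      have h2 : |X i ⟨0, hp⟩| ≤ Mx1 := hMx1.2 ⟨i, rfl⟩
      calc |y i - X i ⟨0, hp⟩ * γ| ≤ |y i| + |X i ⟨0, hp⟩ * γ| := abs_sub _ _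
        _ = |y i| + |X i ⟨0, hp⟩| * γ := by rw [abs_mul, abs_of_pos hγ]
        _ ≤ My + Mx1 * γ := by
            apply add_le_add h1
            exact mul_le_mul_of_nonneg_right h2 hγ.le
        _ = Barg := by rw [hBarg]; ring
    · rw [hs0 i (by rw [hsdef]; simp only [Finset.mem_filter, Finset.mem_univ, true_and]; exact hcase)]
      exact hnn _
  have hr0 : ∀ i, 0 ≤ r i := fun i => hnn _
  -- cardinality of s
  have hscard : s.card = n - (h - 1) := by
    have himg : s.image Fin.val = Finset.Ico (h - 1) n := by
      ext k
      simp only [hsdef, Finset.mem_image, Finset.mem_filter, Finset.mem_univ, true_and,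
        Finset.mem_Ico]
      constructor
      · rintro ⟨j, hj, rfl⟩
        exact ⟨by omega, j.isLt⟩
      · rintro ⟨h1, h2⟩
        refine ⟨⟨k, h2⟩, ?_, rfl⟩
        simp; omega
    rw [← Finset.card_image_of_injective _ Fin.val_injective, himg, Nat.card_Ico]
  -- the trimmed sum bound
  have hmain : trimmedSum h r ≤ ((h - (n - (h - 1)) : ℕ) : ℝ) * ρ Barg := by
    have := trimmedSum_le hhn r hr0 (ρ Barg) hrle s hs0
    rwa [hscard] at this
  -- the penalty
  have hl1 : l1norm β = γ := by
    rw [l1norm]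
    have : ∀ j : Fin p, |β j| = if j = ⟨0, hp⟩ then γ else 0 := by
      intro j
      by_cases hj : j = ⟨0, hp⟩
      · simp [hβ, hj, abs_of_pos hγ]
      · have hjv : (j : ℕ) ≠ 0 := fun hc => hj (Fin.ext hc)
        simp [hβ, hjv, hj]
    simp only [this]
    simp
  -- final cast inequality
  have hcast : ((h - (n - (h - 1)) : ℕ) : ℝ) * ρ Barg ≤
      max ((h : ℝ) - ((n : ℝ) - h + 1)) 0 * ρ Barg := by
    apply mul_le_mul_of_nonneg_right _ (hnn _)
    rcases le_or_gt h (n - (h - 1)) with hle | hlt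
    · have : h - (n - (h - 1)) = 0 := by omega
      rw [this]
      simp [le_max_right]
    · have heq : ((h - (n - (h - 1)) : ℕ) : ℝ) = (h : ℝ) - ((n : ℝ) - h + 1) := by
        have h1 : n - (h - 1) = n - h + 1 := by omega
        rw [h1, Nat.cast_sub (by omega)]
        push_cast [Nat.cast_sub hhn]
        ring
      rw [heq]
      exact le_max_left _ _
  rw [QGen, hl1]
  calc trimmedSum h r + (h : ℝ) * lam * γ
      ≤ ((h - (n - (h - 1)) : ℕ) : ℝ) * ρ Barg + (h : ℝ) * lam * γ := by linarith [hmain]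
    _ ≤ max ((h : ℝ) - ((n : ℝ) - h + 1)) 0 * ρ Barg + (h : ℝ) * lam * γ := by
        linarith [hcast]
end

section
/- Fix λ > 0, a sample Z = (X, y) with X ∈ ℝ^{n×p} and y ∈ ℝ^n, and a subset size 1 ≤ h ≤ n. For a subset H ⊆ {1, …, n} with |H| = h, define Q(H, β) = Σ_{i∈H} (y_i − x_i'β)² + h λ Σ_{j=1}^{p} |β_j|, and let β̂_H be a minimizer of β ↦ Q(H, β). Given a current subset H_k with |H_k| = h, let H_{k+1} be a set of indices of the h smallest squared residuals r_{k,i}² = (y_i − x_i'β̂_{H_k})², i.e., H_{k+1} = { i : r_{k,i}² ∈ { (r_k²)_{j:n} : j = 1, …, h } } (with ties broken so that |H_{k+1}| = h). Then Q(H_{k+1}, β̂_{H_{k+1}}) ≤ Q(H_{k+1}, β̂_{H_k}) ≤ Q(H_k, β̂_{H_k}); that is, each concentration step (C-step) does not increase the sparse LTS objective. -/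
open Finset

/-- The L¹-penalized residual sum of squares on a subsample `H`:
`Q(H, β) = Σ_{i∈H} (yᵢ − xᵢ'β)² + h λ Σ_j |β_j|`. -/
noncomputable def QSub {n p : ℕ} (lam : ℝ) (h : ℕ)
    (X : Fin n → Fin p → ℝ) (y : Fin n → ℝ) (H : Finset (Fin n)) (β : Fin p → ℝ) : ℝ :=
  ∑ i ∈ H, (y i - ∑ j, X i j * β j) ^ 2 + (h : ℝ) * lam * l1norm β

/-- A concentration step (C-step) does not increase the sparse LTS objective: if `β̂_{H_k}`
minimizes `Q(H_k, ·)`, `H_{k+1}` consists of indices of the `h` smallest squared residuals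
with respect to `β̂_{H_k}` (with `|H_{k+1}| = h`), and `β̂_{H_{k+1}}` minimizes
`Q(H_{k+1}, ·)`, then
`Q(H_{k+1}, β̂_{H_{k+1}}) ≤ Q(H_{k+1}, β̂_{H_k}) ≤ Q(H_k, β̂_{H_k})`. -/
theorem cstep_decreases_objective
    {n p h : ℕ} (lam : ℝ) (hlam : 0 < lam)
    (X : Fin n → Fin p → ℝ) (y : Fin n → ℝ)
    (Hk Hk1 : Finset (Fin n)) (hHk : Hk.card = h) (hHk1 : Hk1.card = h)
    (βk βk1 : Fin p → ℝ)
    (hβk : ∀ β : Fin p → ℝ, QSub lam h X y Hk βk ≤ QSub lam h X y Hk β)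
    (hβk1 : ∀ β : Fin p → ℝ, QSub lam h X y Hk1 βk1 ≤ QSub lam h X y Hk1 β)
    (hstep : ∀ i ∈ Hk1, ∀ i' ∉ Hk1,
      (y i - ∑ j, X i j * βk j) ^ 2 ≤ (y i' - ∑ j, X i' j * βk j) ^ 2) :
    QSub lam h X y Hk1 βk1 ≤ QSub lam h X y Hk1 βk ∧
      QSub lam h X y Hk1 βk ≤ QSub lam h X y Hk βk := by
  refine ⟨hβk1 βk, ?_⟩
  unfold QSub
  set f : Fin n → ℝ := fun i => (y i - ∑ j, X i j * βk j) ^ 2 with hf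
  have hsum : ∑ i ∈ Hk1, f i ≤ ∑ i ∈ Hk, f i := by
    have hA : (Hk1 \ Hk).card = (Hk \ Hk1).card := by
      have h1 := Finset.card_sdiff_add_card_inter Hk1 Hk
      have h2 := Finset.card_sdiff_add_card_inter Hk Hk1
      rw [Finset.inter_comm] at h2
      omega
    have hAB : ∑ i ∈ Hk1 \ Hk, f i ≤ ∑ i ∈ Hk \ Hk1, f i := by
      obtain e := Finset.equivOfCardEq hA
      rw [← Finset.sum_coe_sort (Hk1 \ Hk) f, ← Finset.sum_coe_sort (Hk \ Hk1) f,
        ← e.sum_comp (fun b => f b.1)]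
      refine Finset.sum_le_sum fun a _ => ?_
      have ha1 : (a : Fin n) ∈ Hk1 := (Finset.mem_sdiff.mp a.2).1
      have hb : ((e a : _) : Fin n) ∉ Hk1 := (Finset.mem_sdiff.mp (e a).2).2
      exact hstep _ ha1 _ hb
    calc ∑ i ∈ Hk1, f i = ∑ i ∈ Hk1 ∩ Hk, f i + ∑ i ∈ Hk1 \ Hk, f i :=
          (Finset.sum_inter_add_sum_sdiff _ _ _).symm
      _ ≤ ∑ i ∈ Hk ∩ Hk1, f i + ∑ i ∈ Hk \ Hk1, f i := by
          rw [Finset.inter_comm]; exact add_le_add_right hAB _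
      _ = ∑ i ∈ Hk, f i := Finset.sum_inter_add_sum_sdiff _ _ _
  exact add_le_add_left hsum _
end

section
/- Fix λ > 0, a sample Z = (X, y), and 1 ≤ h ≤ n. For H ⊆ {1, …, n} with |H| = h let Q(H, β) = Σ_{i∈H} (y_i − x_i'β)² + h λ Σ_{j=1}^{p} |β_j| and let β̂_H be a minimizer of Q(H, ·). Consider any sequence of subsets H₀, H₁, H₂, … generated by C-steps, i.e., H_{k+1} is a set of indices of the h smallest squared residuals with respect to β̂_{H_k}. Then the sequence of objective values Q(H_k, β̂_{H_k}) is nonincreasing, and since there are only finitely many subsets of size h, the objective values converge after finitely many steps; in particular there exists K such that Q(H_k, β̂_{H_k}) = Q(H_K, β̂_{H_K}) for all k ≥ K. -/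
open Finset

lemma sum_le_sum_of_smallest {n : ℕ} (r : Fin n → ℝ) (A B : Finset (Fin n))
    (hc : A.card = B.card) (hAB : ∀ i ∈ A, ∀ i' ∉ A, r i ≤ r i') :
    ∑ i ∈ A, r i ≤ ∑ i ∈ B, r i := by
  have hcd : (A \ B).card = (B \ A).card := Finset.card_sdiff_comm hc
  have key : ∑ i ∈ A \ B, r i ≤ ∑ i ∈ B \ A, r i := by
    rcases (B \ A).eq_empty_or_nonempty with he | hne
    · have h0 : (A \ B) = ∅ := Finset.card_eq_zero.mp (by rw [hcd, he]; simp)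
      simp [h0, he]
    · obtain ⟨b, hb, hbmin⟩ := Finset.exists_min_image (B \ A) r hne
      have hbA : b ∉ A := (Finset.mem_sdiff.mp hb).2
      have h1 : ∑ i ∈ A \ B, r i ≤ (A \ B).card • r b :=
        Finset.sum_le_card_nsmul _ _ _ fun i hi =>
          hAB i (Finset.mem_sdiff.mp hi).1 b hbA
      have h2 : (B \ A).card • r b ≤ ∑ i ∈ B \ A, r i :=
        Finset.card_nsmul_le_sum _ _ _ fun i hi => hbmin i hi
      calc ∑ i ∈ A \ B, r i ≤ (A \ B).card • r b := h1
        _ = (B \ A).card • r b := by rw [hcd]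
        _ ≤ ∑ i ∈ B \ A, r i := h2
  calc ∑ i ∈ A, r i = ∑ i ∈ A ∩ B, r i + ∑ i ∈ A \ B, r i :=
        (Finset.sum_inter_add_sum_sdiff A B r).symm
    _ ≤ ∑ i ∈ A ∩ B, r i + ∑ i ∈ B \ A, r i := by linarith
    _ = ∑ i ∈ B ∩ A, r i + ∑ i ∈ B \ A, r i := by rw [Finset.inter_comm]
    _ = ∑ i ∈ B, r i := Finset.sum_inter_add_sum_sdiff B A r

/-- Along any sequence of subsets `H₀, H₁, …` generated by C-steps (each `H_{k+1}` consists
of indices of the `h` smallest squared residuals with respect to a minimizer `β̂_{H_k}` of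
`Q(H_k, ·)`), the objective values `Q(H_k, β̂_{H_k})` are nonincreasing, and since there are
only finitely many subsets of size `h`, they converge after finitely many steps: there is
`K` such that `Q(H_k, β̂_{H_k}) = Q(H_K, β̂_{H_K})` for all `k ≥ K`. -/
theorem csteps_converge_finitely
    {n p h : ℕ} (hh1 : 1 ≤ h) (hhn : h ≤ n) (lam : ℝ) (hlam : 0 < lam)
    (X : Fin n → Fin p → ℝ) (y : Fin n → ℝ)
    (H : ℕ → Finset (Fin n)) (βhat : ℕ → Fin p → ℝ)
    (hcard : ∀ k, (H k).card = h)
    (hmin : ∀ k, ∀ β : Fin p → ℝ, QSub lam h X y (H k) (βhat k) ≤ QSub lam h X y (H k) β)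
    (hstep : ∀ k, ∀ i ∈ H (k + 1), ∀ i' ∉ H (k + 1),
      (y i - ∑ j, X i j * βhat k j) ^ 2 ≤ (y i' - ∑ j, X i' j * βhat k j) ^ 2) :
    (∀ k, QSub lam h X y (H (k + 1)) (βhat (k + 1)) ≤ QSub lam h X y (H k) (βhat k)) ∧
      ∃ K : ℕ, ∀ k : ℕ, K ≤ k →
        QSub lam h X y (H k) (βhat k) = QSub lam h X y (H K) (βhat K) := by

  classical
  set q : ℕ → ℝ := fun k => QSub lam h X y (H k) (βhat k) with hq
  have mono : ∀ k, q (k + 1) ≤ q k := by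
    intro k
    have step1 : q (k + 1) ≤ QSub lam h X y (H (k + 1)) (βhat k) := hmin (k + 1) _
    have step2 : QSub lam h X y (H (k + 1)) (βhat k) ≤ q k := by
      unfold QSub
      have := sum_le_sum_of_smallest (fun i => (y i - ∑ j, X i j * βhat k j) ^ 2)
        (H (k + 1)) (H k) (by rw [hcard, hcard]) (hstep k)
      exact add_le_add_left this _
    exact step1.trans step2
  have anti : Antitone q := antitone_nat_of_succ_le mono
  have heq : ∀ k k', H k = H k' → q k = q k' := by
    intro k k' hkk'
    have h1 : q k ≤ q k' := by
      have := hmin k (βhat k')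
      simpa [hq, hkk'] using this
    have h2 : q k' ≤ q k := by
      have := hmin k' (βhat k)
      simpa [hq, hkk'] using this
    linarith
  refine ⟨mono, ?_⟩
  set g : Finset (Fin n) → ℝ := fun S =>
    if hk : ∃ k, H k = S then q hk.choose else 0 with hg
  have hqg : ∀ k, q k = g (H k) := by
    intro k
    have hk : ∃ k', H k' = H k := ⟨k, rfl⟩
    rw [hg]
    simp only [dif_pos hk]
    exact (heq _ _ hk.choose_spec).symm
  have hfin : (Set.range q).Finite := by
    apply (Set.finite_range g).subset
    rintro x ⟨k, rfl⟩
    exact ⟨H k, (hqg k).symm⟩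
  have hne : hfin.toFinset.Nonempty := by
    rw [Set.Finite.toFinset_nonempty]
    exact ⟨q 0, 0, rfl⟩
  obtain ⟨m, hm, hmmin⟩ := Finset.exists_min_image hfin.toFinset id hne
  rw [Set.Finite.mem_toFinset] at hm
  obtain ⟨K, hK⟩ := hm
  refine ⟨K, fun k hk => ?_⟩
  have h1 : q k ≤ q K := anti hk
  have h2 : m ≤ q k := hmmin (q k) (by rw [Set.Finite.mem_toFinset]; exact ⟨k, rfl⟩)
  show q k = q K
  exact le_antisymm h1 (hK ▸ h2)
end

section
/- Fix λ > 0, a sample Z = (X, y) with X ∈ ℝ^{n×p} and y ∈ ℝ^n, and 1 ≤ h ≤ n. Then the sparse LTS objective function f(β) = Σ_{i=1}^{h} (r²(β))_{i:n} + h λ Σ_{j=1}^{p} |β_j|, where r²(β) is the vector of squared residuals (y_i − x_i'β)², attains its minimum over ℝ^p: there exists β* ∈ ℝ^p with f(β*) ≤ f(β) for all β ∈ ℝ^p. -/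
open Finset

/-- The sparse LTS objective function
`f(β) = Σ_{i=1}^{h} (r²(β))_{i:n} + h λ Σ_j |β_j|`. -/
noncomputable def QSparseLTS {n p : ℕ} (lam : ℝ) (h : ℕ)
    (X : Fin n → Fin p → ℝ) (y : Fin n → ℝ) (β : Fin p → ℝ) : ℝ :=
  trimmedSum h (fun i => (y i - ∑ j, X i j * β j) ^ 2) + (h : ℝ) * lam * l1norm β

lemma fin_strictMono_le {h n : ℕ} (f : Fin h → Fin n) (hf : StrictMono f) :
    ∀ i : Fin h, (i : ℕ) ≤ (f i : ℕ) := by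
  intro i
  induction' hk : (i : ℕ) with k ih generalizing i
  · exact Nat.zero_le _
  · have hkh : k < h := by omega
    have h1 := ih ⟨k, hkh⟩ rfl
    have hlt : f ⟨k, hkh⟩ < f i := hf (by simp [Fin.lt_def, hk])
    have := Fin.lt_def.mp hlt
    omega

lemma filter_lt_eq_map {n h : ℕ} (hhn : h ≤ n) :
    (univ.filter (fun i : Fin n => (i : ℕ) < h)) = univ.map (Fin.castLEEmb hhn) := by
  ext i
  simp only [mem_filter, mem_univ, true_and, mem_map, Fin.castLEEmb_apply]
  constructor
  · intro hi; exact ⟨⟨i, hi⟩, by simp [Fin.ext_iff]⟩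
  · rintro ⟨j, rfl⟩; exact j.2

lemma monotone_filter_sum_le {n h : ℕ} (hhn : h ≤ n) (g : Fin n → ℝ) (hg : Monotone g)
    (s : Finset (Fin n)) (hs : s.card = h) :
    ∑ i ∈ univ.filter (fun i : Fin n => (i : ℕ) < h), g i ≤ ∑ i ∈ s, g i := by
  have hmap : s = univ.map (s.orderEmbOfFin hs).toEmbedding := by
    ext i
    simp only [mem_map, mem_univ, true_and, RelEmbedding.coe_toEmbedding]
    constructor
    · intro hi
      have : i ∈ Set.range (s.orderEmbOfFin hs) := by
        rw [Finset.range_orderEmbOfFin]; exact hi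
      obtain ⟨j, hj⟩ := this
      exact ⟨j, hj⟩
    · rintro ⟨j, rfl⟩; exact Finset.orderEmbOfFin_mem s hs j
  rw [filter_lt_eq_map hhn, Finset.sum_map, hmap, Finset.sum_map]
  apply Finset.sum_le_sum
  intro i _
  apply hg
  rw [Fin.le_def]
  simpa using fin_strictMono_le _ (s.orderEmbOfFin hs).strictMono i

lemma trimmedSum_eq_inf' {n h : ℕ} (hhn : h ≤ n) (r : Fin n → ℝ) :
    trimmedSum h r = (Finset.powersetCard h (univ : Finset (Fin n))).inf'
      (Finset.powersetCard_nonempty.mpr (by simpa using hhn)) (fun s => ∑ i ∈ s, r i) := by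
  apply le_antisymm
  · apply Finset.le_inf'
    intro s hs
    have hcard : s.card = h := (Finset.mem_powersetCard_univ.mp hs)
    set σ := Tuple.sort r with hσ
    have hg : Monotone (r ∘ σ) := Tuple.monotone_sort r
    set t := s.image σ.symm with ht
    have htc : t.card = h := by rw [ht, Finset.card_image_of_injective _ σ.symm.injective, hcard]
    have hsum : ∑ i ∈ t, (r ∘ σ) i = ∑ i ∈ s, r i := by
      rw [ht, Finset.sum_image (fun a _ b _ hab => σ.symm.injective hab)]
      simp
    calc trimmedSum h r = ∑ i ∈ univ.filter (fun i : Fin n => (i : ℕ) < h), (r ∘ σ) i := rfl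
      _ ≤ ∑ i ∈ t, (r ∘ σ) i := monotone_filter_sum_le hhn _ hg t htc
      _ = ∑ i ∈ s, r i := hsum
  · have hfc : (univ.filter (fun i : Fin n => (i : ℕ) < h)).card = h := by
      rw [filter_lt_eq_map hhn, Finset.card_map, Finset.card_univ, Fintype.card_fin]
    set σ := Tuple.sort r
    set s₀ := (univ.filter (fun i : Fin n => (i : ℕ) < h)).image σ with hs₀
    have hs₀c : s₀.card = h := by
      rw [hs₀, Finset.card_image_of_injective _ σ.injective, hfc]
    have hmem : s₀ ∈ Finset.powersetCard h (univ : Finset (Fin n)) :=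
      Finset.mem_powersetCard_univ.mpr hs₀c
    refine le_trans (Finset.inf'_le _ hmem) ?_
    rw [hs₀, Finset.sum_image (fun a _ b _ hab => σ.injective hab)]
    exact le_of_eq rfl
/-- The sparse LTS objective function attains its minimum over `ℝ^p`: there exists `β*`
with `f(β*) ≤ f(β)` for all `β`. -/
theorem sparseLTS_attains_min
    {n p h : ℕ} (hh1 : 1 ≤ h) (hhn : h ≤ n) (lam : ℝ) (hlam : 0 < lam)
    (X : Fin n → Fin p → ℝ) (y : Fin n → ℝ) :
    ∃ βstar : Fin p → ℝ, ∀ β : Fin p → ℝ,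
      QSparseLTS lam h X y βstar ≤ QSparseLTS lam h X y β := by
  classical
  have hS : (Finset.powersetCard h (univ : Finset (Fin n))).Nonempty :=
    Finset.powersetCard_nonempty.mpr (by simpa using hhn)
  -- continuity
  have hcont : Continuous (QSparseLTS lam h X y) := by
    have h1 : (fun β : Fin p → ℝ => trimmedSum h (fun i => (y i - ∑ j, X i j * β j) ^ 2))
        = fun β => (Finset.powersetCard h (univ : Finset (Fin n))).inf' hS
            (fun s => ∑ i ∈ s, (y i - ∑ j, X i j * β j) ^ 2) := by
      funext β; exact trimmedSum_eq_inf' hhn _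
    have c1 : Continuous (fun β : Fin p → ℝ =>
        (Finset.powersetCard h (univ : Finset (Fin n))).inf' hS
          (fun s => ∑ i ∈ s, (y i - ∑ j, X i j * β j) ^ 2)) := by
      apply Continuous.finset_inf'_apply hS
      intro s _
      apply continuous_finset_sum
      intro i _
      exact ((continuous_const.sub (continuous_finset_sum _ fun j _ =>
        continuous_const.mul (continuous_apply j))).pow 2)
    have c2 : Continuous (fun β : Fin p → ℝ => (h : ℝ) * lam * l1norm β) := by
      apply continuous_const.mul
      exact continuous_finset_sum _ fun j _ => (continuous_apply j).abs
    have : QSparseLTS lam h X y = fun β =>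
        (fun β : Fin p → ℝ => trimmedSum h (fun i => (y i - ∑ j, X i j * β j) ^ 2)) β
          + (h : ℝ) * lam * l1norm β := rfl
    rw [this, h1]
    exact c1.add c2
  -- basic facts
  have htn : ∀ β : Fin p → ℝ, 0 ≤ trimmedSum h (fun i => (y i - ∑ j, X i j * β j) ^ 2) := by
    intro β
    apply Finset.sum_nonneg
    intro i _
    exact sq_nonneg _
  have hl1 : ∀ β : Fin p → ℝ, ‖β‖ ≤ l1norm β := by
    intro β
    have hnn : 0 ≤ l1norm β := Finset.sum_nonneg fun j _ => abs_nonneg _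
    rw [pi_norm_le_iff_of_nonneg hnn]
    intro j
    rw [Real.norm_eq_abs]
    exact Finset.single_le_sum (fun k _ => abs_nonneg (β k)) (mem_univ j)
  have hc : (0 : ℝ) < (h : ℝ) * lam := by
    apply mul_pos _ hlam
    exact_mod_cast Nat.lt_of_lt_of_le Nat.zero_lt_one hh1
  set M := QSparseLTS lam h X y 0 with hMdef
  have hM0 : 0 ≤ M := by
    have : l1norm (0 : Fin p → ℝ) = 0 := by simp [l1norm]
    rw [hMdef, QSparseLTS, this, mul_zero]
    simpa using htn 0
  set R := M / ((h : ℝ) * lam) + 1 with hRdef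
  have hR : 0 < R := by positivity
  obtain ⟨βstar, hβK, hmin⟩ := (isCompact_closedBall (0 : Fin p → ℝ) R).exists_isMinOn
    ⟨0, Metric.mem_closedBall_self hR.le⟩ hcont.continuousOn
  refine ⟨βstar, fun β => ?_⟩
  by_cases hβ : ‖β‖ ≤ R
  · exact isMinOn_iff.mp hmin β (mem_closedBall_zero_iff.mpr hβ)
  · push_neg at hβ
    have h2 : QSparseLTS lam h X y βstar ≤ M :=
      isMinOn_iff.mp hmin 0 (Metric.mem_closedBall_self hR.le)
    have hRl : R < l1norm β := lt_of_lt_of_le hβ (hl1 β)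
    have hcl : (h : ℝ) * lam * R < (h : ℝ) * lam * l1norm β :=
      (mul_lt_mul_iff_right₀ hc).mpr hRl
    have hcR : (h : ℝ) * lam * R = M + (h : ℝ) * lam := by
      rw [hRdef]; field_simp
    have hkey : QSparseLTS lam h X y β
        = trimmedSum h (fun i => (y i - ∑ j, X i j * β j) ^ 2)
          + (h : ℝ) * lam * l1norm β := rfl
    have hT := htn β
    linarith
end
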